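/- Gradient bound for (H0,H1)-smooth functions: if f: ℝ^d → ℝ is (H0, H1)-smooth with global minimum value f*, then for every w, ‖∇f(w)‖² ≤ (9/4)(H0 + 3H1(f(w) − f*))(f(w) − f*). -/

import Mathlib

set_option maxHeartbeats 800000

open scoped RealInnerProductSpace

/-- One-dimensional Taylor-type inequality with second-derivative upper bound. -/
lemma taylor_upper_aux_stmt6 (φ φ' φ'' : ℝ → ℝ) (C T : ℝ) (hT : 0 ≤ T)
    (hφ : ∀ t, HasDerivAt φ (φ' t) t)
    (hφ' : ∀ t, HasDerivAt φ' (φ'' t) t)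
    (hC : ∀ t ∈ Set.Icc 0 T, φ'' t ≤ C) :
    φ T ≤ φ 0 + T * φ' 0 + C * T ^ 2 / 2 := by
  have hd1 : ∀ t ∈ Set.Icc (0:ℝ) T, φ' t ≤ φ' 0 + C * t := by
    have hmono : MonotoneOn (fun t => φ' 0 + C * t - φ' t) (Set.Icc 0 T) := by
      have key : ∀ t, HasDerivAt (fun t => φ' 0 + C * t - φ' t) (C - φ'' t) t := by
        intro t
        exact (((hasDerivAt_id t).const_mul C |>.const_add (φ' 0)).sub (hφ' t)).congr_deriv (by ring)
      apply monotoneOn_of_deriv_nonneg (convex_Icc 0 T)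
      · exact fun t _ => (key t).continuousAt.continuousWithinAt
      · exact fun t _ => (key t).differentiableAt.differentiableWithinAt
      · intro t ht
        rw [(key t).deriv]
        rw [interior_Icc] at ht
        have := hC t ⟨ht.1.le, ht.2.le⟩
        linarith
    intro t ht
    have := hmono (Set.left_mem_Icc.2 hT) ht ht.1
    simp at this
    linarith
  have hmono : MonotoneOn (fun t => φ 0 + t * φ' 0 + C * t ^ 2 / 2 - φ t) (Set.Icc 0 T) := by
    have key : ∀ t, HasDerivAt (fun t => φ 0 + t * φ' 0 + C * t ^ 2 / 2 - φ t)
        (φ' 0 + C * t - φ' t) t := by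
      intro t
      have hd : HasDerivAt (fun t => φ 0 + t * φ' 0 + C * t ^ 2 / 2 - φ t)
          (φ' 0 + C * t - φ' t) t := by
        have h1 : HasDerivAt (fun t : ℝ => φ 0 + t * φ' 0 + C * t ^ 2 / 2)
            (φ' 0 + C * t) t := by
          have : HasDerivAt (fun t : ℝ => φ 0 + t * φ' 0 + C * t ^ 2 / 2)
              (0 + (1 * φ' 0) + C * (2 * t ^ 1) / 2) t := by
            exact ((hasDerivAt_const t (φ 0)).add
              ((hasDerivAt_id t).mul_const (φ' 0))).add
              (((hasDerivAt_pow 2 t).const_mul C).div_const 2)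
          simpa using this.congr_deriv (by ring)
        exact h1.sub (hφ t)
      exact hd
    apply monotoneOn_of_deriv_nonneg (convex_Icc 0 T)
    · exact fun t _ => (key t).continuousAt.continuousWithinAt
    · exact fun t _ => (key t).differentiableAt.differentiableWithinAt
    · intro t ht
      rw [(key t).deriv]
      rw [interior_Icc] at ht
      have := hd1 t ⟨ht.1.le, ht.2.le⟩
      linarith
  have := hmono (Set.left_mem_Icc.2 hT) (Set.right_mem_Icc.2 hT) hT
  simp at this
  linarith

/-- Gradient bound for `(H0,H1)`-smooth functions. -/
theorem stmt_6 {d : ℕ} (f : EuclideanSpace ℝ (Fin d) → ℝ)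
    (H0 H1 fstar : ℝ) (hH0 : 0 ≤ H0) (hH1 : 0 ≤ H1)
    (hf : ContDiff ℝ 2 f) (hfstar : IsGLB (Set.range f) fstar)
    (hs : ∀ z, ‖iteratedFDeriv ℝ 2 f z‖ ≤ H0 + H1 * (f z - fstar)) :
    ∀ w, ‖gradient f w‖ ^ 2 ≤
      (9 / 4) * (H0 + 3 * H1 * (f w - fstar)) * (f w - fstar) := by
  intro w
  have hdf : Differentiable ℝ f := hf.differentiable two_ne_zero
  have hdf2 : Differentiable ℝ (fderiv ℝ f) :=
    (hf.fderiv_right (m := 1) le_rfl).differentiable one_ne_zero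
  have hlb : ∀ z, fstar ≤ f z := fun z => hfstar.1 ⟨z, rfl⟩
  have hgradeq : ∀ u, fderiv ℝ f w u = ⟪gradient f w, u⟫ := by
    intro u
    rw [(hdf w).hasGradientAt.hasFDerivAt.fderiv]
    simp [InnerProductSpace.toDual_apply_apply]
  set Δ : ℝ := f w - fstar with hΔdef
  have hΔ0 : 0 ≤ Δ := by have := hlb w; simp [hΔdef]; linarith
  by_contra hcon
  push_neg at hcon
  -- the gradient is nonzero
  have hS0 : 0 ≤ H0 + 3 * H1 * Δ := by positivity
  have hG2 : 0 < ‖gradient f w‖ ^ 2 :=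
    lt_of_le_of_lt (by positivity) hcon
  have hGne : gradient f w ≠ 0 := by
    intro h
    rw [h] at hG2; simp at hG2
  have hgpos : (0:ℝ) < ‖gradient f w‖ := norm_pos_iff.2 hGne
  -- Δ is positive
  have hΔpos : 0 < Δ := by
    rcases lt_or_eq_of_le hΔ0 with h | h
    · exact h
    · exfalso
      have hmin : ∀ z, f w ≤ f z := by
        intro z; have := hlb z; simp [hΔdef] at h; linarith
      have hfd0 : fderiv ℝ f w = 0 :=
        ((isMinOn_univ_iff.2 hmin).isLocalMin (by simp)).fderiv_eq_zero
      exact hGne (by simp [gradient, hfd0])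
  set G : EuclideanSpace ℝ (Fin d) := gradient f w with hGdef
  set g : ℝ := ‖G‖ with hgdef
  set v : EuclideanSpace ℝ (Fin d) := -(g⁻¹ • G) with hvdef
  have hv1 : ‖v‖ = 1 := by rw [hvdef, norm_neg]; exact norm_smul_inv_norm hGne
  have hfwv : fderiv ℝ f w v = -g := by
    rw [hgradeq v, hvdef, inner_neg_right, real_inner_smul_right,
      real_inner_self_eq_norm_sq]
    have : g ≠ 0 := ne_of_gt hgpos
    field_simp [hgdef]
    ring
  set η : ℝ := 3 * Δ / (2 * g) with hηdef
  have hηpos : 0 < η := by positivity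
  clear_value Δ G g v η
  -- line derivatives
  have hline : ∀ t : ℝ, HasDerivAt (fun s : ℝ => w + s • v) v t := by
    intro t
    simpa using ((hasDerivAt_id t).smul_const v).const_add w
  set φ : ℝ → ℝ := fun t => f (w + t • v) with hφdef
  set φ' : ℝ → ℝ := fun t => fderiv ℝ f (w + t • v) v with hφ'def
  set φ'' : ℝ → ℝ := fun t => fderiv ℝ (fderiv ℝ f) (w + t • v) v v with hφ''def
  have hφd : ∀ t : ℝ, HasDerivAt φ (φ' t) t := by
    intro t
    exact (hdf _).hasFDerivAt.comp_hasDerivAt t (hline t)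
  have hφ'd : ∀ t : ℝ, HasDerivAt φ' (φ'' t) t := by
    intro t
    have h1 : HasFDerivAt (fun z => fderiv ℝ f z v)
        ((ContinuousLinearMap.apply ℝ ℝ v).comp (fderiv ℝ (fderiv ℝ f) (w + t • v)))
        (w + t • v) :=
      (ContinuousLinearMap.apply ℝ ℝ v).hasFDerivAt.comp _ (hdf2 _).hasFDerivAt
    exact h1.comp_hasDerivAt t (hline t)
  have hφ0 : φ 0 = f w := by simp [hφdef]
  have hφ'0 : φ' 0 = -g := by simp [hφ'def, hfwv]
  have hφ''bd : ∀ t : ℝ, φ'' t ≤ H0 + H1 * (φ t - fstar) := by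
    intro t
    have h1 : φ'' t = iteratedFDeriv ℝ 2 f (w + t • v) ![v, v] := by
      rw [iteratedFDeriv_two_apply]; simp [hφ''def]
    have h2 : iteratedFDeriv ℝ 2 f (w + t • v) ![v, v] ≤
        ‖iteratedFDeriv ℝ 2 f (w + t • v)‖ := by
      calc iteratedFDeriv ℝ 2 f (w + t • v) ![v, v]
          ≤ ‖iteratedFDeriv ℝ 2 f (w + t • v) ![v, v]‖ := le_abs_self _
        _ ≤ ‖iteratedFDeriv ℝ 2 f (w + t • v)‖ * ∏ i, ‖(![v, v]) i‖ :=
            (iteratedFDeriv ℝ 2 f (w + t • v)).le_opNorm _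
        _ = ‖iteratedFDeriv ℝ 2 f (w + t • v)‖ := by
            rw [Fin.prod_univ_two]; simp [hv1]
    rw [h1]
    exact le_trans h2 (hs _)
  -- maximum of φ on [0, η]
  clear_value φ φ' φ''
  have hφcont : Continuous φ := by
    rw [hφdef]
    exact hf.continuous.comp (continuous_const.add (continuous_id.smul continuous_const))
  obtain ⟨ts, hts, htsmax⟩ := isCompact_Icc.exists_isMaxOn
    (Set.nonempty_Icc.2 hηpos.le) hφcont.continuousOn
  set M : ℝ := φ ts - fstar with hMdef
  clear_value M
  have hMΔ : Δ ≤ M := by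
    have h := htsmax (Set.left_mem_Icc.2 hηpos.le)
    simp only [Set.mem_setOf_eq] at h
    rw [hφ0] at h
    have : M = φ ts - fstar := hMdef
    have : Δ = f w - fstar := hΔdef
    linarith
  have hMpos : 0 < M := lt_of_lt_of_le hΔpos hMΔ
  have hCbd : ∀ t ∈ Set.Icc (0:ℝ) η, φ'' t ≤ H0 + H1 * M := by
    intro t ht
    have h1 := hφ''bd t
    have h2 : φ t ≤ φ ts := htsmax ht
    nlinarith
  -- Taylor at ts : M ≤ Δ + (H0 + H1*M) * η^2 / 2
  have hts01 : ts ∈ Set.Icc (0:ℝ) η := hts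
  have htaylor1 : φ ts ≤ φ 0 + ts * φ' 0 + (H0 + H1 * M) * ts ^ 2 / 2 :=
    taylor_upper_aux_stmt6 φ φ' φ'' (H0 + H1 * M) ts hts01.1 hφd hφ'd
      (fun t ht => hCbd t ⟨ht.1, le_trans ht.2 hts01.2⟩)
  have hstar : M ≤ Δ + (H0 + H1 * M) * η ^ 2 / 2 := by
    have h1 : ts * φ' 0 ≤ 0 := by
      rw [hφ'0]; exact mul_nonpos_of_nonneg_of_nonpos hts01.1 (by linarith)
    have h2 : (H0 + H1 * M) * ts ^ 2 ≤ (H0 + H1 * M) * η ^ 2 := by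
      apply mul_le_mul_of_nonneg_left _ (by positivity)
      exact pow_le_pow_left₀ hts01.1 hts01.2 2
    have h3 := htaylor1
    rw [hφ0] at h3
    linarith [hMdef, hΔdef]
  -- key quantitative bound from the contradiction hypothesis
  have hb : η ^ 2 * (H0 + 3 * H1 * Δ) < Δ := by
    have hg2 : (9 / 4) * (H0 + 3 * H1 * Δ) * Δ < g ^ 2 := hcon
    have hη2 : η ^ 2 = 9 * Δ ^ 2 / (4 * g ^ 2) := by
      rw [hηdef]; field_simp; ring
    rw [hη2]
    rw [div_mul_eq_mul_div, div_lt_iff₀ (by positivity)]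
    nlinarith [mul_lt_mul_of_pos_right hg2 hΔpos]
  -- deduce M < 3Δ
  have hbH0 : η ^ 2 * H0 < Δ := by nlinarith [mul_nonneg (sq_nonneg η) (mul_nonneg (mul_nonneg (by norm_num : (0:ℝ) ≤ 3) hH1) hΔ0)]
  have hbH1 : η ^ 2 * (3 * H1) * Δ < Δ := by
    nlinarith [mul_nonneg (sq_nonneg η) hH0]
  have hbH1' : η ^ 2 * (3 * H1) < 1 := by
    have := (mul_lt_mul_iff_of_pos_right hΔpos).1 (by linarith : η ^ 2 * (3 * H1) * Δ < 1 * Δ)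
    exact this
  have hM3 : M < 3 * Δ := by
    have h3 : η ^ 2 * (3 * H1) * M < M := by
      calc η ^ 2 * (3 * H1) * M < 1 * M := by
            exact (mul_lt_mul_iff_of_pos_right hMpos).2 hbH1'
        _ = M := one_mul M
    nlinarith [hstar, hbH0]
  have hCS : H0 + H1 * M ≤ H0 + 3 * H1 * Δ := by nlinarith
  -- Taylor at η : contradiction with fstar lower bound
  have htaylor2 : φ η ≤ φ 0 + η * φ' 0 + (H0 + H1 * M) * η ^ 2 / 2 :=
    taylor_upper_aux_stmt6 φ φ' φ'' (H0 + H1 * M) η hηpos.le hφd hφ'd hCbd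
  have hηg : η * g = 3 * Δ / 2 := by
    rw [hηdef]; field_simp
  have hC2 : (H0 + H1 * M) * η ^ 2 < Δ := by
    calc (H0 + H1 * M) * η ^ 2 ≤ (H0 + 3 * H1 * Δ) * η ^ 2 :=
          mul_le_mul_of_nonneg_right hCS (sq_nonneg η)
      _ < Δ := by linarith [hb]
  have hfinal : φ η < fstar := by
    rw [hφ0, hφ'0] at htaylor2
    have : η * -g = -(3 * Δ / 2) := by rw [← hηg]; ring
    rw [this] at htaylor2
    have hΔf : f w = Δ + fstar := by rw [hΔdef]; ring
    nlinarith [htaylor2, hC2, hΔf]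
  have hlbφ : fstar ≤ φ η := by rw [hφdef]; exact hlb _
  linarith
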